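/- arXiv:1706.00627 — 4 statements merged into one kernel-verified Lean document; each statement's English description precedes it below -/
import Mathlib

section
/- Fix n, m ∈ ℕ and let u = (a^{kl}) ∈ M_m(M_n) with a^{kl} = (λ^{kl}_{ij}) ∈ M_n. Then the supremum sup{ ‖(φ^v)_m(u)‖_m : (E, v) a proper couple } is finite; moreover it does not exceed Σ_{k,l} Σ_{i,j} |λ^{kl}_{ij}|, the sum of the moduli of all scalar entries of u under the identification of M_m(M_n) with M_{mn}. -/
open scoped BigOperators
open Matrix

noncomputable section

/-- Block-diagonal sum `u ⊕ w` of two square matrices with entries in `E`. -/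
def MatDSum {E : Type*} [Zero E] {m k : ℕ}
    (u : Matrix (Fin m) (Fin m) E) (w : Matrix (Fin k) (Fin k) E) :
    Matrix (Fin (m + k)) (Fin (m + k)) E :=
  Matrix.reindex finSumFinEquiv finSumFinEquiv (Matrix.fromBlocks u 0 0 w)

/-- Left action `S·u` of a scalar matrix on an `E`-valued matrix. -/
def scalLeft {E : Type*} [AddCommMonoid E] [Module ℂ E] {m : ℕ}
    (S : Matrix (Fin m) (Fin m) ℂ) (u : Matrix (Fin m) (Fin m) E) :
    Matrix (Fin m) (Fin m) E :=
  Matrix.of fun i j => ∑ k, S i k • u k j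

/-- Right action `u·S` of a scalar matrix on an `E`-valued matrix. -/
def scalRight {E : Type*} [AddCommMonoid E] [Module ℂ E] {m : ℕ}
    (u : Matrix (Fin m) (Fin m) E) (S : Matrix (Fin m) (Fin m) ℂ) :
    Matrix (Fin m) (Fin m) E :=
  Matrix.of fun i j => ∑ k, S k j • u i k

/-- The operator norm `‖S‖_o` of a complex scalar matrix, i.e. its norm as an
operator on the euclidean (Hilbert) space `ℂⁿ`. -/
noncomputable def opNorm {m : ℕ} (S : Matrix (Fin m) (Fin m) ℂ) : ℝ :=
  ‖LinearMap.toContinuousLinearMap (Matrix.toEuclideanLin S)‖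

/-- The `m`-th amplification of a map `φ : E → F`: apply `φ` entrywise. -/
def matAmpl {E F : Type*} (φ : E → F) {m : ℕ} (u : Matrix (Fin m) (Fin m) E) :
    Matrix (Fin m) (Fin m) F :=
  Matrix.of fun i j => φ (u i j)

/-- The operator `φ^v : M_n → E`, `(λ_{ij}) ↦ Σ_{i,j} λ_{ji} • x_{ij}`, associated with
`v = (x_{ij}) ∈ M_n(E)`. -/
def matPhi {E : Type*} [AddCommMonoid E] [Module ℂ E] {n : ℕ}
    (v : Matrix (Fin n) (Fin n) E) (a : Matrix (Fin n) (Fin n) ℂ) : E :=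
  ∑ i, ∑ j, a j i • v i j

/-- `ν` is a matrix-norm on the complex vector space `E`: each `ν m` is a norm on
`M_m(E)`, and Axioms 1 and 2 of Effros/Ruan hold. -/
def IsMatrixNorm {E : Type} [AddCommGroup E] [Module ℂ E]
    (ν : ∀ m : ℕ, Matrix (Fin m) (Fin m) E → ℝ) : Prop :=
  (∀ (m : ℕ) (u v : Matrix (Fin m) (Fin m) E), ν m (u + v) ≤ ν m u + ν m v) ∧
  (∀ (m : ℕ) (c : ℂ) (u : Matrix (Fin m) (Fin m) E), ν m (c • u) = ‖c‖ * ν m u) ∧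
  (∀ (m : ℕ) (u : Matrix (Fin m) (Fin m) E), ν m u = 0 ↔ u = 0) ∧
  (∀ (m k : ℕ) (u : Matrix (Fin m) (Fin m) E),
      ν (m + k) (MatDSum u (0 : Matrix (Fin k) (Fin k) E)) = ν m u) ∧
  (∀ (m : ℕ) (S : Matrix (Fin m) (Fin m) ℂ) (u : Matrix (Fin m) (Fin m) E),
      ν m (scalLeft S u) ≤ opNorm S * ν m u) ∧
  (∀ (m : ℕ) (u : Matrix (Fin m) (Fin m) E) (S : Matrix (Fin m) (Fin m) ℂ),
      ν m (scalRight u S) ≤ ν m u * opNorm S)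

/-- The set of values `‖(φ^v)_m(u)‖_m` over all proper couples `(E, v)`, i.e. over all
matricially normed spaces `E` and all `v` in the closed unit ball of `M_n(E)`. -/
def hatNormSet (n : ℕ) {m : ℕ}
    (u : Matrix (Fin m) (Fin m) (Matrix (Fin n) (Fin n) ℂ)) : Set ℝ :=
  { r | ∃ (E : Type) (_ : AddCommGroup E) (_ : Module ℂ E)
        (ν : ∀ m' : ℕ, Matrix (Fin m') (Fin m') E → ℝ),
        IsMatrixNorm ν ∧
        ∃ v : Matrix (Fin n) (Fin n) E, ν n v ≤ 1 ∧ r = ν m (matAmpl (matPhi v) u) }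

/-- The matrix-norm of the matricially normed space `M̂_n`:
`‖u‖_m = sup { ‖(φ^v)_m(u)‖_m : (E, v) a proper couple }`. -/
noncomputable def hatNorm (n : ℕ) {m : ℕ}
    (u : Matrix (Fin m) (Fin m) (Matrix (Fin n) (Fin n) ℂ)) : ℝ :=
  sSup (hatNormSet n u)

section Aux

variable {E : Type} [AddCommGroup E] [Module ℂ E]

lemma opNorm_stdBasisMatrix_le {m : ℕ} (i j : Fin m) :
    opNorm (Matrix.single i j (1:ℂ)) ≤ 1 := by
  apply ContinuousLinearMap.opNorm_le_bound _ zero_le_one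
  intro x
  rw [one_mul]
  have hx : (LinearMap.toContinuousLinearMap
      (Matrix.toEuclideanLin (Matrix.single i j (1:ℂ)))) x
      = EuclideanSpace.single i (x j) := by
    ext a
    simp only [LinearMap.coe_toContinuousLinearMap', Matrix.toEuclideanLin_apply,
      Matrix.mulVec_single, one_mul]
    simp [EuclideanSpace.single, Function.update_apply, Pi.single_apply, eq_comm]
    simp [Matrix.mulVec, dotProduct, Matrix.single, ite_and]
  rw [hx, EuclideanSpace.norm_single]
  have h1 : ‖x j‖ ^ 2 ≤ ∑ b, ‖x b‖ ^ 2 :=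
    Finset.single_le_sum (f := fun b => ‖x b‖ ^ 2)
      (fun b _ => sq_nonneg _) (Finset.mem_univ j)
  have h2 : ‖x‖ = Real.sqrt (∑ b, ‖x b‖ ^ 2) := by
    rw [EuclideanSpace.norm_eq]
  rw [h2]
  calc ‖x j‖ = Real.sqrt (‖x j‖ ^ 2) := (Real.sqrt_sq (norm_nonneg _)).symm
    _ ≤ Real.sqrt (∑ b, ‖x b‖ ^ 2) := Real.sqrt_le_sqrt h1

variable {ν : ∀ m : ℕ, Matrix (Fin m) (Fin m) E → ℝ}

lemma nu_zero (hν : IsMatrixNorm ν) (m : ℕ) : ν m 0 = 0 :=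
  (hν.2.2.1 m 0).mpr rfl

lemma nu_nonneg (hν : IsMatrixNorm ν) (m : ℕ) (u : Matrix (Fin m) (Fin m) E) :
    0 ≤ ν m u := by
  have hneg : ν m (-u) = ν m u := by
    have h := hν.2.1 m (-1) u
    simpa using h
  have h := hν.1 m u (-u)
  rw [add_neg_cancel, nu_zero hν, hneg] at h
  linarith

lemma nu_sum_le (hν : IsMatrixNorm ν) (m : ℕ) {ι : Type*} [DecidableEq ι] (s : Finset ι)
    (f : ι → Matrix (Fin m) (Fin m) E) :
    ν m (∑ x ∈ s, f x) ≤ ∑ x ∈ s, ν m (f x) := by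
  induction s using Finset.induction with
  | empty => simp [nu_zero hν]
  | insert a s h ih =>
    rw [Finset.sum_insert h, Finset.sum_insert h]
    exact le_trans (hν.1 m _ _) (by linarith)

lemma matDSum_one (k' : ℕ) (x : E) :
    MatDSum (Matrix.of fun _ _ => x : Matrix (Fin 1) (Fin 1) E)
        (0 : Matrix (Fin k') (Fin k') E)
      = Matrix.single (⟨0, by omega⟩ : Fin (1 + k')) ⟨0, by omega⟩ x := by
  ext a b
  rcases a with ⟨a, ha⟩
  rcases b with ⟨b, hb⟩
  simp only [MatDSum, Matrix.reindex_apply, Matrix.submatrix_apply,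
    Matrix.single, Matrix.of_apply]
  rcases Nat.eq_zero_or_pos a with rfl | hA <;> rcases Nat.eq_zero_or_pos b with rfl | hB
  · have h1 : (finSumFinEquiv.symm (⟨0, ha⟩ : Fin (1 + k'))) = Sum.inl 0 := by
      rw [Equiv.symm_apply_eq]; rfl
    rw [h1]
    simp [h1, Fin.ext_iff]
  · have h1 : (finSumFinEquiv.symm (⟨0, ha⟩ : Fin (1 + k'))) = Sum.inl 0 := by
      rw [Equiv.symm_apply_eq]; rfl
    have h2 : (finSumFinEquiv.symm (⟨b, hb⟩ : Fin (1 + k'))) = Sum.inr ⟨b - 1, by omega⟩ := by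
      rw [Equiv.symm_apply_eq, finSumFinEquiv_apply_right]
      simp [Fin.ext_iff]; omega
    rw [h1, h2]
    simp [h1, h2, Fin.ext_iff]
    intro h; omega
  · have h1 : (finSumFinEquiv.symm (⟨0, hb⟩ : Fin (1 + k'))) = Sum.inl 0 := by
      rw [Equiv.symm_apply_eq]; rfl
    have h2 : (finSumFinEquiv.symm (⟨a, ha⟩ : Fin (1 + k'))) = Sum.inr ⟨a - 1, by omega⟩ := by
      rw [Equiv.symm_apply_eq, finSumFinEquiv_apply_right]
      simp [Fin.ext_iff]; omega
    rw [h1, h2]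
    simp [h1, h2, Fin.ext_iff]
    intro h; omega
  · have h2 : (finSumFinEquiv.symm (⟨a, ha⟩ : Fin (1 + k'))) = Sum.inr ⟨a - 1, by omega⟩ := by
      rw [Equiv.symm_apply_eq, finSumFinEquiv_apply_right]
      simp [Fin.ext_iff]; omega
    have h3 : (finSumFinEquiv.symm (⟨b, hb⟩ : Fin (1 + k'))) = Sum.inr ⟨b - 1, by omega⟩ := by
      rw [Equiv.symm_apply_eq, finSumFinEquiv_apply_right]
      simp [Fin.ext_iff]; omega
    rw [h2, h3]
    simp [h2, h3, Fin.ext_iff]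
    intro h; omega

lemma scal_move {p : ℕ} (k l z : Fin p) (x : E) :
    scalLeft (Matrix.single k z 1)
      (scalRight (Matrix.single z z x) (Matrix.single z l 1))
      = Matrix.single k l x := by
  ext a b
  simp [scalLeft, scalRight, Matrix.single, ite_and, smul_ite,
    Finset.sum_ite_eq, Finset.sum_ite_eq', eq_comm]
  aesop

lemma scal_extract {p : ℕ} (i j z : Fin p) (v : Matrix (Fin p) (Fin p) E) :
    scalLeft (Matrix.single z i 1)
      (scalRight v (Matrix.single j z 1))
      = Matrix.single z z (v i j) := by
  ext a b
  simp [scalLeft, scalRight, Matrix.single, ite_and, smul_ite,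
    Finset.sum_ite_eq, Finset.sum_ite_eq', eq_comm]
  aesop

end Aux

section MainAux

variable {E : Type} [AddCommGroup E] [Module ℂ E]
variable {ν : ∀ m : ℕ, Matrix (Fin m) (Fin m) E → ℝ}

lemma nu_move (hν : IsMatrixNorm ν) {p : ℕ} (k l z : Fin p) (x : E) :
    ν p (Matrix.single k l x) ≤ ν p (Matrix.single z z x) := by
  rw [← scal_move k l z x]
  refine le_trans (hν.2.2.2.2.1 _ _ _) ?_
  have h2 := hν.2.2.2.2.2 p (Matrix.single z z x) (Matrix.single z l 1)
  have o1 := opNorm_stdBasisMatrix_le (m := p) k z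
  have o2 := opNorm_stdBasisMatrix_le (m := p) z l
  have o1' : (0:ℝ) ≤ opNorm (Matrix.single k z (1:ℂ)) := norm_nonneg _
  have o2' : (0:ℝ) ≤ opNorm (Matrix.single z l (1:ℂ)) := norm_nonneg _
  have n1 := nu_nonneg hν p (scalRight (Matrix.single z z x) (Matrix.single z l 1))
  have n2 := nu_nonneg hν p (Matrix.single z z x)
  nlinarith

lemma nu_extract (hν : IsMatrixNorm ν) {p : ℕ} (i j z : Fin p)
    (v : Matrix (Fin p) (Fin p) E) :
    ν p (Matrix.single z z (v i j)) ≤ ν p v := by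
  rw [← scal_extract i j z v]
  refine le_trans (hν.2.2.2.2.1 _ _ _) ?_
  have h2 := hν.2.2.2.2.2 p v (Matrix.single j z 1)
  have o1 := opNorm_stdBasisMatrix_le (m := p) z i
  have o2 := opNorm_stdBasisMatrix_le (m := p) j z
  have o1' : (0:ℝ) ≤ opNorm (Matrix.single z i (1:ℂ)) := norm_nonneg _
  have o2' : (0:ℝ) ≤ opNorm (Matrix.single j z (1:ℂ)) := norm_nonneg _
  have n1 := nu_nonneg hν p (scalRight v (Matrix.single j z 1))
  have n2 := nu_nonneg hν p v
  nlinarith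

lemma nu_stdBasis_le (hν : IsMatrixNorm ν) (m' n' : ℕ)
    (v : Matrix (Fin (1+n')) (Fin (1+n')) E)
    (k l : Fin (1+m')) (i j : Fin (1+n')) :
    ν (1+m') (Matrix.single k l (v i j)) ≤ ν (1+n') v := by
  calc ν (1+m') (Matrix.single k l (v i j))
      ≤ ν (1+m') (Matrix.single ⟨0, by omega⟩ ⟨0, by omega⟩ (v i j)) :=
        nu_move hν k l _ _
    _ = ν 1 (Matrix.of fun _ _ => v i j) := by
        rw [← matDSum_one m' (v i j)]; exact hν.2.2.2.1 1 m' _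
    _ = ν (1+n') (Matrix.single ⟨0, by omega⟩ ⟨0, by omega⟩ (v i j)) := by
        rw [← matDSum_one n' (v i j)]; exact (hν.2.2.2.1 1 n' _).symm
    _ ≤ ν (1+n') v := nu_extract hν i j _ v

end MainAux

/-- **Proposition 1.** For fixed `n, m`, and `u = (a^{kl}) ∈ M_m(M_n)`, the supremum
defining `‖u‖_m` in `M̂_n` is finite (the set of values is bounded above); moreover it
does not exceed the sum `Σ_{k,l} Σ_{i,j} |λ^{kl}_{ij}|` of the moduli of all scalar
entries of `u`. -/
theorem hatNorm_bddAbove_and_le_sum_abs (n m : ℕ) (hn : 0 < n) (hm : 0 < m)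
    (u : Matrix (Fin m) (Fin m) (Matrix (Fin n) (Fin n) ℂ)) :
    BddAbove (hatNormSet n u) ∧
    hatNorm n u ≤ ∑ k, ∑ l, ∑ i, ∑ j, ‖u k l i j‖ := by
  obtain ⟨n', rfl⟩ : ∃ n', n = 1 + n' := ⟨n - 1, by omega⟩
  obtain ⟨m', rfl⟩ : ∃ m', m = 1 + m' := ⟨m - 1, by omega⟩
  have hBnn : (0:ℝ) ≤ ∑ k, ∑ l, ∑ i, ∑ j, ‖u k l i j‖ := by
    refine Finset.sum_nonneg fun k _ => Finset.sum_nonneg fun l _ =>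
      Finset.sum_nonneg fun i _ => Finset.sum_nonneg fun j _ => ?_
    exact norm_nonneg _
  have key : ∀ r ∈ hatNormSet (1 + n') u,
      r ≤ ∑ k, ∑ l, ∑ i, ∑ j, ‖u k l i j‖ := by
    rintro r ⟨E, _, _, ν, hν, v, hv, rfl⟩
    have hW : matAmpl (matPhi v) u
        = ∑ k, ∑ l, ∑ i, ∑ j, u k l j i • Matrix.single k l (v i j) := by
      ext a b
      simp [matAmpl, matPhi, Matrix.sum_apply, Matrix.single, smul_ite, ite_and,
        Finset.sum_ite_eq, Finset.sum_ite_eq']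
    calc ν (1+m') (matAmpl (matPhi v) u)
        ≤ ∑ k, ∑ l, ∑ i, ∑ j, ‖u k l j i‖ * ν (1+m') (Matrix.single k l (v i j)) := by
          rw [hW]
          refine le_trans (nu_sum_le hν _ _ _) (Finset.sum_le_sum fun k _ => ?_)
          refine le_trans (nu_sum_le hν _ _ _) (Finset.sum_le_sum fun l _ => ?_)
          refine le_trans (nu_sum_le hν _ _ _) (Finset.sum_le_sum fun i _ => ?_)
          refine le_trans (nu_sum_le hν _ _ _) (Finset.sum_le_sum fun j _ => ?_)
          exact le_of_eq (hν.2.1 _ _ _)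
      _ ≤ ∑ k, ∑ l, ∑ i, ∑ j, ‖u k l j i‖ := by
          refine Finset.sum_le_sum fun k _ => Finset.sum_le_sum fun l _ =>
            Finset.sum_le_sum fun i _ => Finset.sum_le_sum fun j _ => ?_
          refine mul_le_of_le_one_right (norm_nonneg _) ?_
          exact le_trans (nu_stdBasis_le hν m' n' v k l i j) hv
      _ = ∑ k, ∑ l, ∑ i, ∑ j, ‖u k l i j‖ := by
          refine Finset.sum_congr rfl fun k _ => Finset.sum_congr rfl fun l _ => ?_
          rw [Finset.sum_comm]
  exact ⟨⟨_, fun r hr => key r hr⟩, Real.sSup_le key hBnn⟩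
end
end

section
/- Fix n ∈ ℕ. The norm of the matrix 𝕀 in M_n(\widehat{M}_n) equals 1, i.e., sup{ ‖(φ^v)_n(𝕀)‖_n : (E, v) a proper couple } = 1. -/
open scoped BigOperators
open Matrix

noncomputable section

/-- The matrix `𝕀 ∈ M_n(M_n)` whose `(i,j)`-th entry is the elementary matrix `e_{ji}`
(that is, `𝕀 = Σ_{ij} e_{ji} ⊗ e_{ij}`). -/
def bbI (n : ℕ) : Matrix (Fin n) (Fin n) (Matrix (Fin n) (Fin n) ℂ) :=
  Matrix.of fun i j => Matrix.single j i (1 : ℂ)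


namespace Prop7Aux

open scoped Matrix.Norms.L2Operator in
lemma opNorm_eq_l2 {m : ℕ} (S : Matrix (Fin m) (Fin m) ℂ) : opNorm S = ‖S‖ := rfl

open scoped Matrix.Norms.L2Operator in
lemma opNorm_conjT {m : ℕ} (S : Matrix (Fin m) (Fin m) ℂ) : opNorm Sᴴ = opNorm S := by
  rw [opNorm_eq_l2, opNorm_eq_l2, Matrix.l2_opNorm_conjTranspose]

/-- Frobenius (Hilbert–Schmidt) norm of a complex matrix, via the euclidean norm. -/
noncomputable def frob {a b : Type*} [Fintype a] [Fintype b] (A : Matrix a b ℂ) : ℝ :=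
  ‖(WithLp.equiv 2 (a × b → ℂ)).symm (fun p => A p.1 p.2)‖

variable {a b : Type*} [Fintype a] [Fintype b]

lemma frob_eq (A : Matrix a b ℂ) : frob A = Real.sqrt (∑ i, ∑ j, ‖A i j‖^2) := by
  rw [frob, EuclideanSpace.norm_eq]
  congr 1
  rw [Fintype.sum_prod_type]
  rfl

lemma frob_nonneg (A : Matrix a b ℂ) : 0 ≤ frob A := norm_nonneg _

lemma frob_sq (A : Matrix a b ℂ) : frob A ^ 2 = ∑ i, ∑ j, ‖A i j‖^2 := by
  rw [frob_eq, Real.sq_sqrt]; positivity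

lemma frob_add_le (A B : Matrix a b ℂ) : frob (A + B) ≤ frob A + frob B := by
  have h : (WithLp.equiv 2 (a × b → ℂ)).symm (fun p => (A + B) p.1 p.2)
      = (WithLp.equiv 2 (a × b → ℂ)).symm (fun p => A p.1 p.2)
      + (WithLp.equiv 2 (a × b → ℂ)).symm (fun p => B p.1 p.2) := rfl
  rw [frob, h]
  exact norm_add_le _ _

lemma frob_smul (c : ℂ) (A : Matrix a b ℂ) : frob (c • A) = ‖c‖ * frob A := by
  have h : (WithLp.equiv 2 (a × b → ℂ)).symm (fun p => (c • A) p.1 p.2)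
      = c • (WithLp.equiv 2 (a × b → ℂ)).symm (fun p => A p.1 p.2) := rfl
  rw [frob, h, norm_smul, frob]

lemma frob_eq_zero_iff (A : Matrix a b ℂ) : frob A = 0 ↔ A = 0 := by
  rw [frob, norm_eq_zero]
  constructor
  · intro h; ext i j
    have := congrFun (congrArg (WithLp.equiv 2 (a × b → ℂ)) h) (i, j)
    simpa using this
  · rintro rfl; ext p; simp [WithLp.equiv]

lemma frob_conjT (A : Matrix a b ℂ) : frob Aᴴ = frob A := by
  rw [frob_eq, frob_eq, Finset.sum_comm]
  simp [Matrix.conjTranspose_apply]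

lemma frob_dsum {m k : ℕ} (u : Matrix (Fin m) (Fin m) ℂ) :
    frob (MatDSum u (0 : Matrix (Fin k) (Fin k) ℂ)) = frob u := by
  rw [frob_eq, frob_eq]
  congr 1
  calc ∑ i, ∑ j, ‖MatDSum u (0 : Matrix (Fin k) (Fin k) ℂ) i j‖ ^ 2
      = ∑ p : Fin m ⊕ Fin k, ∑ q : Fin m ⊕ Fin k,
          ‖(Matrix.fromBlocks u 0 0 (0 : Matrix (Fin k) (Fin k) ℂ)) p q‖ ^ 2 := by
        rw [← Equiv.sum_comp finSumFinEquiv]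
        refine Finset.sum_congr rfl fun p _ => ?_
        rw [← Equiv.sum_comp finSumFinEquiv]
        refine Finset.sum_congr rfl fun q _ => ?_
        simp [MatDSum]
    _ = ∑ p : Fin m, ∑ q : Fin m, ‖u p q‖ ^ 2 := by
        simp [Fintype.sum_sum_type]

lemma euc_normsq {m : ℕ} (y : EuclideanSpace ℂ (Fin m)) : ‖y‖ ^ 2 = ∑ i, ‖y i‖ ^ 2 := by
  rw [EuclideanSpace.norm_eq, Real.sq_sqrt]; positivity

lemma frob_mul_le_op {m : ℕ} (S u : Matrix (Fin m) (Fin m) ℂ) :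
    frob (S * u) ≤ opNorm S * frob u := by
  have hS : 0 ≤ opNorm S := norm_nonneg _
  have key : ∀ j, ∑ i, ‖(S * u) i j‖ ^ 2 ≤ opNorm S ^ 2 * ∑ i, ‖u i j‖ ^ 2 := by
    intro j
    set x : EuclideanSpace ℂ (Fin m) := (WithLp.equiv 2 (Fin m → ℂ)).symm (fun i => u i j) with hxdef
    have hx : Matrix.toEuclideanLin S x
        = (WithLp.equiv 2 (Fin m → ℂ)).symm (fun i => (S * u) i j) := by
      rw [Matrix.toEuclideanLin_apply]
      congr 1
    have hxnorm : ‖x‖ ^ 2 = ∑ i, ‖u i j‖ ^ 2 := by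
      rw [euc_normsq]
      rfl
    have hSu : ∑ i, ‖(S * u) i j‖ ^ 2 = ‖Matrix.toEuclideanLin S x‖ ^ 2 := by
      rw [hx, euc_normsq]
      rfl
    have h1 : ‖Matrix.toEuclideanLin S x‖ ≤ opNorm S * ‖x‖ :=
      (LinearMap.toContinuousLinearMap (Matrix.toEuclideanLin S)).le_opNorm x
    have h2 : ‖Matrix.toEuclideanLin S x‖ ^ 2 ≤ opNorm S ^ 2 * ‖x‖ ^ 2 := by
      have h0 := norm_nonneg (Matrix.toEuclideanLin S x)
      nlinarith [norm_nonneg x]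
    rw [hSu, ← hxnorm]
    exact h2
  have hsq : frob (S * u) ^ 2 ≤ opNorm S ^ 2 * frob u ^ 2 := by
    rw [frob_sq, frob_sq]
    rw [Finset.sum_comm]
    calc ∑ j, ∑ i, ‖(S * u) i j‖ ^ 2
        ≤ ∑ j, opNorm S ^ 2 * ∑ i, ‖u i j‖ ^ 2 := Finset.sum_le_sum fun j _ => key j
      _ = opNorm S ^ 2 * ∑ j, ∑ i, ‖u i j‖ ^ 2 := (Finset.mul_sum _ _ _).symm
      _ = opNorm S ^ 2 * ∑ i, ∑ j, ‖u i j‖ ^ 2 := by rw [Finset.sum_comm]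
  nlinarith [frob_nonneg (S * u), frob_nonneg u, mul_nonneg hS (frob_nonneg u)]

lemma frob_mul_le_op_right {m : ℕ} (u S : Matrix (Fin m) (Fin m) ℂ) :
    frob (u * S) ≤ frob u * opNorm S := by
  calc frob (u * S) = frob ((u * S)ᴴ) := (frob_conjT _).symm
    _ = frob (Sᴴ * uᴴ) := by rw [Matrix.conjTranspose_mul]
    _ ≤ opNorm Sᴴ * frob uᴴ := frob_mul_le_op _ _
    _ = frob u * opNorm S := by rw [opNorm_conjT, frob_conjT, mul_comm]

lemma scalLeft_eq_mul {m : ℕ} (S u : Matrix (Fin m) (Fin m) ℂ) :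
    scalLeft S u = S * u := by
  ext i j
  simp [scalLeft, Matrix.mul_apply, smul_eq_mul]

lemma scalRight_eq_mul {m : ℕ} (u S : Matrix (Fin m) (Fin m) ℂ) :
    scalRight u S = u * S := by
  ext i j
  simp [scalRight, Matrix.mul_apply, smul_eq_mul, mul_comm]

lemma isMatrixNorm_frob : IsMatrixNorm (fun m (u : Matrix (Fin m) (Fin m) ℂ) => frob u) := by
  refine ⟨fun m u v => frob_add_le u v, fun m c u => frob_smul c u,
    fun m u => frob_eq_zero_iff u, fun m k u => frob_dsum u, ?_, ?_⟩
  · intro m S u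
    rw [scalLeft_eq_mul]
    exact frob_mul_le_op S u
  · intro m u S
    rw [scalRight_eq_mul]
    exact frob_mul_le_op_right u S

lemma matAmpl_matPhi_bbI {n : ℕ} {E : Type*} [AddCommMonoid E] [Module ℂ E]
    (v : Matrix (Fin n) (Fin n) E) : matAmpl (matPhi v) (bbI n) = v := by
  ext i j
  show matPhi v (Matrix.single j i (1 : ℂ)) = v i j
  unfold matPhi
  rw [Finset.sum_eq_single i]
  · rw [Finset.sum_eq_single j]
    · simp [Matrix.single]
    · intro q _ hq
      simp only [Matrix.single, Matrix.of_apply]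
      rw [if_neg (by exact fun h => hq h.1.symm)]
      exact zero_smul _ _
    · simp
  · intro p _ hp
    apply Finset.sum_eq_zero
    intro q _
    simp only [Matrix.single, Matrix.of_apply]
    rw [if_neg (by exact fun h => hp h.2.symm)]
    exact zero_smul _ _
  · simp

lemma frob_stdBasis {n : ℕ} (i j : Fin n) :
    frob (Matrix.single i j (1 : ℂ)) = 1 := by
  rw [frob_eq]
  rw [Finset.sum_eq_single i]
  · rw [Finset.sum_eq_single j]
    · simp [Matrix.single]
    · intro q _ hq
      simp only [Matrix.single, Matrix.of_apply]
      rw [if_neg (by exact fun h => hq h.2.symm)]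
      simp
    · simp
  · intro p _ hp
    apply Finset.sum_eq_zero
    intro q _
    simp only [Matrix.single, Matrix.of_apply]
    rw [if_neg (by exact fun h => hp h.1.symm)]
    simp
  · simp

end Prop7Aux

open Prop7Aux in
/-- **Proposition 7.** The norm of `𝕀` in `M_n(M̂_n)` equals `1`:
`sup{ ‖(φ^v)_n(𝕀)‖_n : (E,v) a proper couple } = 1`. -/
theorem hatNorm_bbI (n : ℕ) (hn : 0 < n) : hatNorm n (bbI n) = 1 := by
  have hub : ∀ r ∈ hatNormSet n (bbI n), r ≤ 1 := by
    rintro r ⟨E, _, _, ν, hν, v, hv, rfl⟩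
    rw [matAmpl_matPhi_bbI]
    exact hv
  have hmem : (1 : ℝ) ∈ hatNormSet n (bbI n) := by
    refine ⟨ℂ, inferInstance, inferInstance,
      fun m' (u : Matrix (Fin m') (Fin m') ℂ) => frob u, isMatrixNorm_frob,
      Matrix.single ⟨0, hn⟩ ⟨0, hn⟩ (1 : ℂ), ?_, ?_⟩
    · exact le_of_eq (frob_stdBasis _ _)
    · rw [matAmpl_matPhi_bbI]
      exact (frob_stdBasis _ _).symm
  refine le_antisymm (Real.sSup_le hub zero_le_one) (le_csSup ⟨1, hub⟩ hmem)
end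
end

section
/- Fix n ∈ ℕ. For every matricially normed space E, the map v ↦ φ^v is a bijection from the closed unit ball B_{M_n(E)} onto the set of completely contractive operators from \widehat{M}_n to E. (This expresses that \widehat{M}_n is the ⊙_n-free matricially normed space with a one-point base, where ⊙_n is the rig E ↦ B_{M_n(E)}.) -/
open scoped BigOperators
open Matrix

noncomputable section

/-- `φ` is a completely contractive (linear) operator between the matricially normed
spaces `(E, νE)` and `(F, νF)`: every amplification `φ_m` is contractive. -/
def IsCC {E F : Type} [AddCommGroup E] [Module ℂ E] [AddCommGroup F] [Module ℂ F]
    (νE : ∀ m : ℕ, Matrix (Fin m) (Fin m) E → ℝ)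
    (νF : ∀ m : ℕ, Matrix (Fin m) (Fin m) F → ℝ) (φ : E → F) : Prop :=
  IsLinearMap ℂ φ ∧
  ∀ (m : ℕ) (u : Matrix (Fin m) (Fin m) E), νF m (matAmpl φ u) ≤ νE m u


namespace HatAux

/-- The matrix with a single (possibly) nonzero entry `x` at position `(i, j)`. -/
def single {E : Type*} [Zero E] {m : ℕ} (i j : Fin m) (x : E) :
    Matrix (Fin m) (Fin m) E :=
  Matrix.of fun a b => if a = i then (if b = j then x else 0) else 0

@[simp] lemma single_apply {E : Type*} [Zero E] {m : ℕ} (i j a b : Fin m) (x : E) :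
    single i j x a b = if a = i then (if b = j then x else 0) else 0 := rfl

lemma opNorm_single_le {m : ℕ} (i j : Fin m) : opNorm (single i j (1 : ℂ)) ≤ 1 := by
  rw [opNorm]
  refine ContinuousLinearMap.opNorm_le_bound _ zero_le_one fun x => ?_
  rw [one_mul, LinearMap.coe_toContinuousLinearMap']
  have hx : Matrix.toEuclideanLin (single i j (1 : ℂ)) x = EuclideanSpace.single i (x j) := by
    rw [Matrix.toEuclideanLin_apply, ← EuclideanSpace.toLp_single]
    congr 1
    funext a
    simp [Matrix.mulVec, dotProduct, Pi.single_apply, Finset.sum_ite_eq]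
  rw [hx, EuclideanSpace.norm_single]
  have h1 : ‖x j‖ ^ 2 ≤ ∑ k, ‖x k‖ ^ 2 :=
    Finset.single_le_sum (fun k _ => sq_nonneg ‖x k‖) (Finset.mem_univ j)
  calc ‖x j‖ = Real.sqrt (‖x j‖ ^ 2) := by rw [Real.sqrt_sq (norm_nonneg _)]
    _ ≤ Real.sqrt (∑ k, ‖x k‖ ^ 2) := Real.sqrt_le_sqrt h1
    _ = ‖x‖ := (EuclideanSpace.norm_eq x).symm

variable {E : Type} [AddCommGroup E] [Module ℂ E]
variable {ν : ∀ m : ℕ, Matrix (Fin m) (Fin m) E → ℝ}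

lemma nu_zero (hE : IsMatrixNorm ν) (m : ℕ) : ν m 0 = 0 := (hE.2.2.1 m 0).2 rfl

lemma nu_nonneg (hE : IsMatrixNorm ν) (m : ℕ) (u : Matrix (Fin m) (Fin m) E) :
    0 ≤ ν m u := by
  have h0 : ν m (u + (-u)) = 0 := by rw [add_neg_cancel, nu_zero hE]
  have h1 := hE.1 m u (-u)
  have h2 : ν m (-u) = ν m u := by
    have := hE.2.1 m (-1 : ℂ) u
    simpa using this
  linarith

lemma nu_sum_le (hE : IsMatrixNorm ν) {m : ℕ} {ι : Type*} (s : Finset ι)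
    (f : ι → Matrix (Fin m) (Fin m) E) :
    ν m (∑ i ∈ s, f i) ≤ ∑ i ∈ s, ν m (f i) := by
  classical
  induction s using Finset.induction with
  | empty => simp [nu_zero hE]
  | insert a s h ih =>
    rw [Finset.sum_insert h, Finset.sum_insert h]
    exact le_trans (hE.1 _ _ _) (by linarith)

lemma nu_cast {a b : ℕ} (h : a = b) (w : Matrix (Fin a) (Fin a) E) :
    ν b (Matrix.reindex (finCongr h) (finCongr h) w) = ν a w := by
  subst h; simp

lemma reindex_single {a b : ℕ} (h : a = b) (i j : Fin a) (x : E) :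
    Matrix.reindex (finCongr h) (finCongr h) (single i j x) =
      single (Fin.cast h i) (Fin.cast h j) x := by
  subst h; simp

lemma nu_single_entry_le (hE : IsMatrixNorm ν) {m : ℕ}
    (w : Matrix (Fin m) (Fin m) E) (i j p q : Fin m) :
    ν m (single i j (w p q)) ≤ ν m w := by
  have key : single i j (w p q) =
      scalLeft (single i p (1 : ℂ)) (scalRight w (single q j (1 : ℂ))) := by
    ext a b
    simp only [scalLeft, scalRight, single, Matrix.of_apply]
    split_ifs <;> simp [ite_smul, Finset.sum_ite_eq, Finset.sum_ite_eq']
  have h1 := hE.2.2.2.2.1 m (single i p (1 : ℂ)) (scalRight w (single q j (1 : ℂ)))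
  have h2 := hE.2.2.2.2.2 m w (single q j (1 : ℂ))
  have o1 := opNorm_single_le i p
  have o2 := opNorm_single_le q j
  have n2 := nu_nonneg hE m (scalRight w (single q j (1 : ℂ)))
  have nw := nu_nonneg hE m w
  calc ν m (single i j (w p q))
      = ν m (scalLeft (single i p (1 : ℂ)) (scalRight w (single q j (1 : ℂ)))) := by rw [key]
    _ ≤ opNorm (single i p (1 : ℂ)) * ν m (scalRight w (single q j (1 : ℂ))) := h1
    _ ≤ 1 * ν m (scalRight w (single q j (1 : ℂ))) := mul_le_mul_of_nonneg_right o1 n2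
    _ = ν m (scalRight w (single q j (1 : ℂ))) := one_mul _
    _ ≤ ν m w * opNorm (single q j (1 : ℂ)) := h2
    _ ≤ ν m w * 1 := mul_le_mul_of_nonneg_left o2 nw
    _ = ν m w := mul_one _

lemma matDSum_single {m k : ℕ} (i j : Fin m) (x : E) :
    MatDSum (single i j x) (0 : Matrix (Fin k) (Fin k) E) =
      single (Fin.castAdd k i) (Fin.castAdd k j) x := by
  ext a b
  rw [show a = finSumFinEquiv (finSumFinEquiv.symm a) from (Equiv.apply_symm_apply _ _).symm,
      show b = finSumFinEquiv (finSumFinEquiv.symm b) from (Equiv.apply_symm_apply _ _).symm]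
  have hi := i.isLt
  have hj := j.isLt
  rcases finSumFinEquiv.symm a with c | c <;> rcases finSumFinEquiv.symm b with d | d <;>
    simp only [MatDSum, Matrix.reindex_apply, Matrix.submatrix_apply, Equiv.symm_apply_apply,
      finSumFinEquiv_apply_left, finSumFinEquiv_apply_right, Matrix.fromBlocks_apply₁₁,
      Matrix.fromBlocks_apply₁₂, Matrix.fromBlocks_apply₂₁, Matrix.fromBlocks_apply₂₂,
      single_apply, Matrix.zero_apply, finSumFinEquiv_symm_apply_castAdd,
      finSumFinEquiv_symm_apply_natAdd, Fin.ext_iff, Fin.coe_castAdd, Fin.coe_natAdd] <;>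
    split_ifs <;> first | rfl | omega

lemma matDSum_apply_left {m k : ℕ} (v : Matrix (Fin m) (Fin m) E)
    (w : Matrix (Fin k) (Fin k) E) (p q : Fin m) :
    MatDSum v w (Fin.castAdd k p) (Fin.castAdd k q) = v p q := by
  simp [MatDSum]

lemma nu_single_le (hE : IsMatrixNorm ν) {m n : ℕ} (v : Matrix (Fin n) (Fin n) E)
    (i j : Fin m) (p q : Fin n) :
    ν m (single i j (v p q)) ≤ ν n v := by
  set i' := Fin.cast (Nat.add_comm m n) (Fin.castAdd n i) with hi'
  set j' := Fin.cast (Nat.add_comm m n) (Fin.castAdd n j) with hj'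
  have h1 : ν m (single i j (v p q)) =
      ν (m + n) (single (Fin.castAdd n i) (Fin.castAdd n j) (v p q)) := by
    rw [← matDSum_single]
    exact (hE.2.2.2.1 m n _).symm
  have h2 : ν (m + n) (single (Fin.castAdd n i) (Fin.castAdd n j) (v p q)) =
      ν (n + m) (single i' j' (v p q)) := by
    rw [hi', hj', ← reindex_single (Nat.add_comm m n) (Fin.castAdd n i) (Fin.castAdd n j) (v p q)]
    exact (nu_cast (ν := ν) (Nat.add_comm m n) _).symm
  have h4 := nu_single_entry_le hE (MatDSum v (0 : Matrix (Fin m) (Fin m) E))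
    i' j' (Fin.castAdd m p) (Fin.castAdd m q)
  rw [matDSum_apply_left] at h4
  have h5 : ν (n + m) (MatDSum v (0 : Matrix (Fin m) (Fin m) E)) = ν n v := hE.2.2.2.1 n m v
  rw [h1, h2]
  exact h4.trans_eq h5

lemma ampl_eq_sum {m n : ℕ} (v : Matrix (Fin n) (Fin n) E)
    (u : Matrix (Fin m) (Fin m) (Matrix (Fin n) (Fin n) ℂ)) :
    matAmpl (matPhi v) u =
      ∑ i, ∑ j, ∑ p, ∑ q, (u i j q p) • single i j (v p q) := by
  ext a b
  simp [matAmpl, matPhi, Matrix.sum_apply, single, smul_ite, Finset.sum_ite_eq,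
    Finset.sum_ite_eq']

lemma key_bound {F : Type} [AddCommGroup F] [Module ℂ F]
    {νF : ∀ m : ℕ, Matrix (Fin m) (Fin m) F → ℝ} (hF : IsMatrixNorm νF)
    {n : ℕ} (v : Matrix (Fin n) (Fin n) F) (hv : νF n v ≤ 1) {m : ℕ}
    (u : Matrix (Fin m) (Fin m) (Matrix (Fin n) (Fin n) ℂ)) :
    νF m (matAmpl (matPhi v) u) ≤ ∑ i, ∑ j, ∑ p, ∑ q, ‖u i j q p‖ := by
  rw [ampl_eq_sum]
  refine le_trans (nu_sum_le hF _ _) (Finset.sum_le_sum fun i _ => ?_)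
  refine le_trans (nu_sum_le hF _ _) (Finset.sum_le_sum fun j _ => ?_)
  refine le_trans (nu_sum_le hF _ _) (Finset.sum_le_sum fun p _ => ?_)
  refine le_trans (nu_sum_le hF _ _) (Finset.sum_le_sum fun q _ => ?_)
  rw [hF.2.1]
  have h1 : νF m (single i j (v p q)) ≤ 1 := le_trans (nu_single_le hF v i j p q) hv
  exact mul_le_of_le_one_right (norm_nonneg _) h1

lemma hatNormSet_bddAbove (n : ℕ) {m : ℕ}
    (u : Matrix (Fin m) (Fin m) (Matrix (Fin n) (Fin n) ℂ)) :
    BddAbove (hatNormSet n u) := by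
  refine ⟨∑ i, ∑ j, ∑ p, ∑ q, ‖u i j q p‖, ?_⟩
  rintro r ⟨F, i1, i2, νF, hF, v, hv, rfl⟩
  exact key_bound hF v hv u

lemma matPhi_single {n : ℕ} (w : Matrix (Fin n) (Fin n) E) (i j : Fin n) :
    matPhi w (single j i (1 : ℂ)) = w i j := by
  simp [matPhi, single, ite_smul, Finset.sum_ite_eq, Finset.sum_ite_eq']

lemma matPhi_isLinear {n : ℕ} (v : Matrix (Fin n) (Fin n) E) :
    IsLinearMap ℂ (matPhi v) := by
  constructor
  · intro a b
    simp [matPhi, add_smul, Finset.sum_add_distrib]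
  · intro c a
    simp [matPhi, Finset.smul_sum, smul_smul, Matrix.smul_apply]

end HatAux

lemma mem_hatNormSet {E : Type} [AddCommGroup E] [Module ℂ E]
    {νE : ∀ m : ℕ, Matrix (Fin m) (Fin m) E → ℝ} (hE : IsMatrixNorm νE) {n : ℕ}
    (v : Matrix (Fin n) (Fin n) E) (hv : νE n v ≤ 1) (m : ℕ)
    (u : Matrix (Fin m) (Fin m) (Matrix (Fin n) (Fin n) ℂ)) :
    νE m (matAmpl (matPhi v) u) ∈ hatNormSet n u := by
  exact ⟨E, inferInstance, inferInstance, νE, hE, v, hv, rfl⟩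

lemma le_hatNorm {E : Type} [AddCommGroup E] [Module ℂ E]
    {νE : ∀ m : ℕ, Matrix (Fin m) (Fin m) E → ℝ} (hE : IsMatrixNorm νE) {n : ℕ}
    (v : Matrix (Fin n) (Fin n) E) (hv : νE n v ≤ 1) (m : ℕ)
    (u : Matrix (Fin m) (Fin m) (Matrix (Fin n) (Fin n) ℂ)) :
    νE m (matAmpl (matPhi v) u) ≤ hatNorm n u :=
  le_csSup (HatAux.hatNormSet_bddAbove n u) (mem_hatNormSet hE v hv m u)


/-- **Theorem 2.** For every matricially normed space `(E, νE)`, the map `v ↦ φ^v` is a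
bijection from the closed unit ball of `M_n(E)` onto the set of completely contractive
operators from `M̂_n` to `E`.  (`M̂_n` is the `⊙_n`-free matricially normed space with a
one-point base.) -/
theorem hatMn_free_one_point (n : ℕ) (hn : 0 < n) (E : Type)
    [AddCommGroup E] [Module ℂ E]
    (νE : ∀ m : ℕ, Matrix (Fin m) (Fin m) E → ℝ) (hE : IsMatrixNorm νE) :
    Set.BijOn (fun v : Matrix (Fin n) (Fin n) E => matPhi v)
      { v : Matrix (Fin n) (Fin n) E | νE n v ≤ 1 }
      { φ : Matrix (Fin n) (Fin n) ℂ → E |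
        IsCC (fun m (u : Matrix (Fin m) (Fin m) (Matrix (Fin n) (Fin n) ℂ)) =>
          hatNorm n u) νE φ } := by
  refine ⟨?_, ?_, ?_⟩
  · -- MapsTo
    intro v hv
    refine ⟨HatAux.matPhi_isLinear v, fun m u => ?_⟩
    exact le_hatNorm hE v hv m u
  · -- InjOn
    intro v _ w _ h
    ext i j
    have h' : matPhi v (HatAux.single j i (1 : ℂ)) = matPhi w (HatAux.single j i (1 : ℂ)) :=
      congrFun h (HatAux.single j i (1 : ℂ))
    simpa [HatAux.matPhi_single] using h'
  · -- SurjOn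
    intro φ hφ
    obtain ⟨hlin, hcc⟩ := hφ
    refine ⟨Matrix.of fun i j => φ (HatAux.single j i (1 : ℂ)), ?_, ?_⟩
    · -- the preimage lies in the closed unit ball
      have hU : (Matrix.of fun i j => φ (HatAux.single j i (1 : ℂ)))
          = matAmpl φ (Matrix.of fun i j : Fin n => HatAux.single j i (1 : ℂ)) := rfl
      show νE n _ ≤ 1
      rw [hU]
      refine le_trans (hcc n _) ?_
      refine Real.sSup_le ?_ zero_le_one
      rintro r ⟨F, i1, i2, νF, hF, w, hw, rfl⟩
      letI := i1; letI := i2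
      have hw' : matAmpl (matPhi w)
          (Matrix.of fun i j : Fin n => HatAux.single j i (1 : ℂ)) = w := by
        ext p q
        simpa [matAmpl] using HatAux.matPhi_single (E := F) w p q
      rw [hw']
      exact hw
    · -- `φ^(v') = φ`
      funext a
      have hL : φ = (IsLinearMap.mk' φ hlin : Matrix (Fin n) (Fin n) ℂ →ₗ[ℂ] E) := rfl
      have hsum : (∑ i, ∑ j, a j i • HatAux.single j i (1 : ℂ)) = a := by
        ext p q
        simp [Matrix.sum_apply, HatAux.single, smul_ite, Finset.sum_ite_eq,
          Finset.sum_ite_eq']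
      show matPhi _ a = φ a
      conv_rhs => rw [← hsum]
      rw [hL]
      simp [matPhi, map_sum, _root_.map_smul]
end
end

section
/- Let (E_ν)_{ν∈Λ} be a family of matricially normed spaces and let E be their matricial ℓ¹-sum, with natural embeddings i_ν : E_ν → E. Then E is a matricially normed space, each i_ν is completely contractive, and (E, (i_ν)) is the coproduct of the family in the category of matricially normed spaces and completely contractive operators: for every matricially normed space Y and every family of completely contractive operators ψ_ν : E_ν → Y there exists a unique completely contractive operator ψ : E → Y with ψ ∘ i_ν = ψ_ν for all ν. -/
open scoped BigOperators
open Matrix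

noncomputable section

open DirectSum

/-- The `i`-th component matrix of a matrix with entries in a direct sum. -/
def compMat {ι : Type} {E : ι → Type} [∀ i, AddCommGroup (E i)] {m : ℕ}
    (u : Matrix (Fin m) (Fin m) (⨁ i, E i)) (i : ι) :
    Matrix (Fin m) (Fin m) (E i) :=
  Matrix.of fun a b => u a b i

/-- The matrix-norm of the matricial `ℓ¹`-sum of the family `(E i, ν i)`:
`‖⊕_i u_i‖_m = Σ_i ‖u_i‖_m` (a finite sum, since only finitely many components of a
matrix over the algebraic direct sum are nonzero). -/
noncomputable def l1Norm {ι : Type} {E : ι → Type} [∀ i, AddCommGroup (E i)]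
    (ν : ∀ i, ∀ m : ℕ, Matrix (Fin m) (Fin m) (E i) → ℝ)
    (m : ℕ) (u : Matrix (Fin m) (Fin m) (⨁ i, E i)) : ℝ :=
  ∑ᶠ i, ν i m (compMat u i)

section Aux

variable {E₀ : Type} [AddCommGroup E₀] [Module ℂ E₀]

lemma mn_zero {ν : ∀ m : ℕ, Matrix (Fin m) (Fin m) E₀ → ℝ} (h : IsMatrixNorm ν) (m : ℕ) :
    ν m 0 = 0 := (h.2.2.1 m 0).mpr rfl

lemma mn_nonneg {ν : ∀ m : ℕ, Matrix (Fin m) (Fin m) E₀ → ℝ} (h : IsMatrixNorm ν) (m : ℕ)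
    (u : Matrix (Fin m) (Fin m) E₀) : 0 ≤ ν m u := by
  have h1 := h.1 m u (-u)
  have h2 : ν m (-u) = ν m u := by
    have := h.2.1 m (-1) u
    simpa using this
  rw [add_neg_cancel, mn_zero h, h2] at h1
  linarith

lemma mn_sum_le {ι' : Type*} {ν : ∀ m : ℕ, Matrix (Fin m) (Fin m) E₀ → ℝ} (h : IsMatrixNorm ν)
    (m : ℕ) (s : Finset ι') (f : ι' → Matrix (Fin m) (Fin m) E₀) :
    ν m (∑ i ∈ s, f i) ≤ ∑ i ∈ s, ν m (f i) := by
  classical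
  induction s using Finset.induction with
  | empty => simp [mn_zero h]
  | @insert a s ha ih =>
    rw [Finset.sum_insert ha, Finset.sum_insert ha]
    exact le_trans (h.1 m _ _) (by linarith)

variable {E F : Type*}

lemma matAmpl_dsum [Zero E] [Zero F] (φ : E → F) (hφ : φ 0 = 0) {m k : ℕ}
    (u : Matrix (Fin m) (Fin m) E) (w : Matrix (Fin k) (Fin k) E) :
    matAmpl φ (MatDSum u w) = MatDSum (matAmpl φ u) (matAmpl φ w) := by
  ext a b
  simp only [matAmpl, MatDSum, Matrix.of_apply, Matrix.reindex_apply, Matrix.submatrix_apply]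
  rcases finSumFinEquiv.symm a with a' | a' <;> rcases finSumFinEquiv.symm b with b' | b' <;>
    simp [Matrix.fromBlocks, hφ]

lemma matAmpl_scalLeft [AddCommGroup E] [Module ℂ E] [AddCommGroup F] [Module ℂ F]
    (φ : E → F) (hφ : IsLinearMap ℂ φ) {m : ℕ} (S : Matrix (Fin m) (Fin m) ℂ)
    (u : Matrix (Fin m) (Fin m) E) :
    matAmpl φ (scalLeft S u) = scalLeft S (matAmpl φ u) := by
  ext a b
  simp only [matAmpl, scalLeft, Matrix.of_apply]
  have h := map_sum (IsLinearMap.mk' φ hφ) (fun k => S a k • u k b) Finset.univ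
  simp only [IsLinearMap.mk'_apply] at h
  rw [h]
  simp [hφ.map_smul]

lemma matAmpl_scalRight [AddCommGroup E] [Module ℂ E] [AddCommGroup F] [Module ℂ F]
    (φ : E → F) (hφ : IsLinearMap ℂ φ) {m : ℕ} (u : Matrix (Fin m) (Fin m) E)
    (S : Matrix (Fin m) (Fin m) ℂ) :
    matAmpl φ (scalRight u S) = scalRight (matAmpl φ u) S := by
  ext a b
  simp only [matAmpl, scalRight, Matrix.of_apply]
  have h := map_sum (IsLinearMap.mk' φ hφ) (fun k => S k b • u a k) Finset.univ
  simp only [IsLinearMap.mk'_apply] at h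
  rw [h]
  simp [hφ.map_smul]

variable {ι : Type} [DecidableEq ι] {Eι : ι → Type} [∀ i, AddCommGroup (Eι i)]
  [∀ i, Module ℂ (Eι i)]

lemma eval_isLinear (i : ι) : IsLinearMap ℂ (fun x : ⨁ j, Eι j => x i) :=
  ⟨fun x y => DFinsupp.add_apply x y i, fun c x => DFinsupp.smul_apply c x i⟩

lemma exists_support_elt (x : ⨁ i, Eι i) : ∃ s : Finset ι, ∀ i ∉ s, x i = 0 := by
  classical
  exact ⟨DFinsupp.support x, fun i hi => DFinsupp.notMem_support_iff.mp hi⟩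

lemma exists_support {m : ℕ} (u : Matrix (Fin m) (Fin m) (⨁ i, Eι i)) :
    ∃ s : Finset ι, ∀ i ∉ s, compMat u i = 0 := by
  classical
  have h : ∀ a b : Fin m, ∃ s : Finset ι, ∀ i ∉ s, u a b i = 0 := fun a b =>
    exists_support_elt (u a b)
  choose f hf using h
  refine ⟨Finset.univ.biUnion fun a => Finset.univ.biUnion fun b => f a b, fun i hi => ?_⟩
  ext a b
  simp only [compMat, Matrix.of_apply, Matrix.zero_apply]
  refine hf a b i fun him => hi ?_
  exact Finset.mem_biUnion.mpr ⟨a, Finset.mem_univ _,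
    Finset.mem_biUnion.mpr ⟨b, Finset.mem_univ _, him⟩⟩

lemma compMat_add {m : ℕ} (u v : Matrix (Fin m) (Fin m) (⨁ i, Eι i)) (i : ι) :
    compMat (u + v) i = compMat u i + compMat v i := by
  ext a b; exact DFinsupp.add_apply (u a b) (v a b) i

lemma compMat_smul {m : ℕ} (c : ℂ) (u : Matrix (Fin m) (Fin m) (⨁ i, Eι i)) (i : ι) :
    compMat (c • u) i = c • compMat u i := by
  ext a b; exact DFinsupp.smul_apply c (u a b) i

lemma l1Norm_eq_sum (ν : ∀ i, ∀ m : ℕ, Matrix (Fin m) (Fin m) (Eι i) → ℝ)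
    (hν : ∀ i, IsMatrixNorm (ν i)) {m : ℕ} (u : Matrix (Fin m) (Fin m) (⨁ i, Eι i))
    {s : Finset ι} (hs : ∀ i ∉ s, compMat u i = 0) :
    l1Norm ν m u = ∑ i ∈ s, ν i m (compMat u i) := by
  refine finsum_eq_sum_of_support_subset _ fun i hi => by_contra fun his => ?_
  exact hi (show ν i m (compMat u i) = 0 by rw [hs i his]; exact mn_zero (hν i) m)

lemma decomp_eq (x : ⨁ i, Eι i) {s : Finset ι} (hs : ∀ i ∉ s, x i = 0) :
    x = ∑ i ∈ s, DirectSum.lof ℂ ι Eι i (x i) := by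
  classical
  refine DFinsupp.ext fun j => ?_
  rw [DFinsupp.finset_sum_apply]
  by_cases hj : j ∈ s
  · rw [Finset.sum_eq_single j (fun i _ hij => by
      rw [DirectSum.lof_eq_of]; exact DirectSum.of_eq_of_ne _ _ _ (Ne.symm hij))
      (fun h => absurd hj h)]
    exact (DirectSum.lof_apply ℂ j (x j)).symm
  · rw [hs j hj, Finset.sum_eq_zero]
    intro i hi
    rw [DirectSum.lof_eq_of]
    exact DirectSum.of_eq_of_ne _ _ _ (fun h => hj (h ▸ hi))

end Aux

/-- **Proposition 8.** The matricial `ℓ¹`-sum `E = ⊕_ν E_ν` of a family of matricially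
normed spaces is a matricially normed space, the natural embeddings `i_ν : E_ν → E` are
completely contractive, and `(E, (i_ν))` is the coproduct of the family in the category
of matricially normed spaces and completely contractive operators. -/
theorem l1Sum_is_coproduct (ι : Type) [DecidableEq ι] (E : ι → Type)
    [∀ i, AddCommGroup (E i)] [∀ i, Module ℂ (E i)]
    (ν : ∀ i, ∀ m : ℕ, Matrix (Fin m) (Fin m) (E i) → ℝ)
    (hν : ∀ i, IsMatrixNorm (ν i)) :
    IsMatrixNorm (l1Norm ν) ∧
    (∀ i, IsCC (ν i) (l1Norm ν) (DirectSum.lof ℂ ι E i)) ∧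
    (∀ (Y : Type) (_ : AddCommGroup Y) (_ : Module ℂ Y)
        (νY : ∀ m : ℕ, Matrix (Fin m) (Fin m) Y → ℝ), IsMatrixNorm νY →
      ∀ ψ : ∀ i, E i → Y, (∀ i, IsCC (ν i) νY (ψ i)) →
        ∃! Ψ : (⨁ i, E i) → Y, IsCC (l1Norm ν) νY Ψ ∧
          ∀ (i : ι) (x : E i), Ψ (DirectSum.lof ℂ ι E i x) = ψ i x) := by
  classical
  refine ⟨⟨?_, ?_, ?_, ?_, ?_, ?_⟩, ?_, ?_⟩
  · -- triangle inequality
    intro m u v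
    obtain ⟨su, hsu⟩ := exists_support u
    obtain ⟨sv, hsv⟩ := exists_support v
    have h1 : ∀ i ∉ su ∪ sv, compMat (u + v) i = 0 := fun i hi => by
      rw [compMat_add, hsu i (fun h => hi (Finset.mem_union_left _ h)),
        hsv i (fun h => hi (Finset.mem_union_right _ h)), add_zero]
    rw [l1Norm_eq_sum ν hν _ h1,
      l1Norm_eq_sum ν hν u (s := su ∪ sv) (fun i hi => hsu i (fun h => hi (Finset.mem_union_left _ h))),
      l1Norm_eq_sum ν hν v (s := su ∪ sv) (fun i hi => hsv i (fun h => hi (Finset.mem_union_right _ h))),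
      ← Finset.sum_add_distrib]
    refine Finset.sum_le_sum fun i _ => ?_
    rw [compMat_add]
    exact (hν i).1 m _ _
  · -- homogeneity
    intro m c u
    obtain ⟨s, hs⟩ := exists_support u
    have h1 : ∀ i ∉ s, compMat (c • u) i = 0 := fun i hi => by
      rw [compMat_smul, hs i hi, smul_zero]
    rw [l1Norm_eq_sum ν hν _ h1, l1Norm_eq_sum ν hν u hs, Finset.mul_sum]
    refine Finset.sum_congr rfl fun i _ => ?_
    rw [compMat_smul]
    exact (hν i).2.1 m c _
  · -- definiteness
    intro m u
    constructor
    · intro h0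
      obtain ⟨s, hs⟩ := exists_support u
      rw [l1Norm_eq_sum ν hν u hs] at h0
      have hz : ∀ i ∈ s, ν i m (compMat u i) = 0 :=
        (Finset.sum_eq_zero_iff_of_nonneg (fun i _ => mn_nonneg (hν i) m _)).mp h0
      have hall : ∀ i, compMat u i = 0 := fun i => by
        by_cases hi : i ∈ s
        · exact ((hν i).2.2.1 m _).mp (hz i hi)
        · exact hs i hi
      ext a b
      rename_i i
      have h2 : compMat u i a b = (0 : Matrix (Fin m) (Fin m) (E i)) a b :=
        congrFun (congrFun (hall i) a) b
      simpa [compMat] using h2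
    · rintro rfl
      rw [l1Norm_eq_sum ν hν 0 (s := (∅ : Finset ι)) (fun i _ => by
        ext a b; simp [compMat]), Finset.sum_empty]
  · -- Axiom 1
    intro m k u
    refine finsum_congr fun i => ?_
    have h0 : matAmpl (fun x : ⨁ j, E j => x i)
        (0 : Matrix (Fin k) (Fin k) (⨁ j, E j)) = 0 := by
      ext a b; simp [matAmpl]
    have h := matAmpl_dsum (fun x : ⨁ j, E j => x i) (by simp) u
      (0 : Matrix (Fin k) (Fin k) (⨁ j, E j))
    rw [h0] at h
    have h2 : compMat (MatDSum u (0 : Matrix (Fin k) (Fin k) (⨁ j, E j))) i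
        = MatDSum (compMat u i) (0 : Matrix (Fin k) (Fin k) (E i)) := h
    rw [h2]
    exact (hν i).2.2.2.1 m k _
  · -- Axiom 2 left
    intro m S u
    obtain ⟨s, hs⟩ := exists_support u
    have hc : ∀ i, compMat (scalLeft S u) i = scalLeft S (compMat u i) :=
      fun i => matAmpl_scalLeft (fun x : ⨁ j, E j => x i) (eval_isLinear i) S u
    have h1 : ∀ i ∉ s, compMat (scalLeft S u) i = 0 := fun i hi => by
      rw [hc, hs i hi]; ext a b; simp [scalLeft]
    rw [l1Norm_eq_sum ν hν _ h1, l1Norm_eq_sum ν hν u hs, Finset.mul_sum]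
    refine Finset.sum_le_sum fun i _ => ?_
    rw [hc]
    exact (hν i).2.2.2.2.1 m S _
  · -- Axiom 2 right
    intro m u S
    obtain ⟨s, hs⟩ := exists_support u
    have hc : ∀ i, compMat (scalRight u S) i = scalRight (compMat u i) S :=
      fun i => matAmpl_scalRight (fun x : ⨁ j, E j => x i) (eval_isLinear i) u S
    have h1 : ∀ i ∉ s, compMat (scalRight u S) i = 0 := fun i hi => by
      rw [hc, hs i hi]; ext a b; simp [scalRight]
    rw [l1Norm_eq_sum ν hν _ h1, l1Norm_eq_sum ν hν u hs, Finset.sum_mul]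
    refine Finset.sum_le_sum fun i _ => ?_
    rw [hc]
    exact (hν i).2.2.2.2.2 m _ S
  · -- embeddings are completely contractive
    intro i
    refine ⟨(DirectSum.lof ℂ ι E i).isLinear, fun m u => le_of_eq ?_⟩
    have hkey : ∀ j, j ≠ i →
        ν j m (compMat (matAmpl (⇑(DirectSum.lof ℂ ι E i)) u) j) = 0 := by
      intro j hj
      have hz : compMat (matAmpl (⇑(DirectSum.lof ℂ ι E i)) u) j = 0 := by
        ext a b
        simp only [compMat, matAmpl, Matrix.of_apply, Matrix.zero_apply]
        rw [DirectSum.lof_eq_of]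
        exact DirectSum.of_eq_of_ne _ _ _ hj
      rw [hz]
      exact mn_zero (hν j) m
    have h1 : l1Norm ν m (matAmpl (⇑(DirectSum.lof ℂ ι E i)) u)
        = ν i m (compMat (matAmpl (⇑(DirectSum.lof ℂ ι E i)) u) i) :=
      finsum_eq_single _ i hkey
    have h2 : compMat (matAmpl (⇑(DirectSum.lof ℂ ι E i)) u) i = u := by
      ext a b
      simp only [compMat, matAmpl, Matrix.of_apply]
      exact DirectSum.lof_apply ℂ i (u a b)
    rw [h1, h2]
  · -- universal property
    intro Y _ _ νY hνY ψ hψ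
    set L : ∀ i, E i →ₗ[ℂ] Y := fun i => IsLinearMap.mk' (ψ i) (hψ i).1 with hLdef
    set Ψ₀ : (⨁ i, E i) →ₗ[ℂ] Y := DirectSum.toModule ℂ ι Y L with hΨdef
    have hlof : ∀ (i : ι) (x : E i), Ψ₀ (DirectSum.lof ℂ ι E i x) = ψ i x := by
      intro i x
      rw [hΨdef, DirectSum.toModule_lof, hLdef]
      rfl
    have hsum : ∀ (x : ⨁ i, E i) (s : Finset ι), (∀ i ∉ s, x i = 0) →
        Ψ₀ x = ∑ i ∈ s, ψ i (x i) := by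
      intro x s hs
      have h := congrArg Ψ₀ (decomp_eq x hs)
      rw [map_sum] at h
      simp only [hlof] at h
      exact h
    refine ⟨⇑Ψ₀, ⟨⟨Ψ₀.isLinear, ?_⟩, fun i x => hlof i x⟩, ?_⟩
    · intro m u
      obtain ⟨s, hs⟩ := exists_support u
      have hmat : matAmpl (⇑Ψ₀) u = ∑ i ∈ s, matAmpl (ψ i) (compMat u i) := by
        ext a b
        rw [Matrix.sum_apply]
        have hx : ∀ i ∉ s, (u a b) i = 0 := fun i hi => by
          have := congrFun (congrFun (hs i hi) a) b
          simpa [compMat] using this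
        simpa [matAmpl, compMat] using hsum (u a b) s hx
      rw [hmat, l1Norm_eq_sum ν hν u hs]
      exact le_trans (mn_sum_le hνY m s _)
        (Finset.sum_le_sum fun i _ => (hψ i).2 m (compMat u i))
    · rintro Ψ' ⟨⟨hlin, _⟩, hc⟩
      funext x
      obtain ⟨s, hs⟩ := exists_support_elt x
      have h : Ψ' x = ∑ i ∈ s, Ψ' (DirectSum.lof ℂ ι E i (x i)) := by
        conv_lhs => rw [decomp_eq x hs]
        exact map_sum (IsLinearMap.mk' Ψ' hlin) _ s
      rw [h]
      simp only [hc]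
      rw [hsum x s hs]
end
end
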